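/- A finite tree T is antipalindromic if and only if T is isomorphic to the hairing H(S) of some finite tree S with an odd number of vertices. -/

import Mathlib

open Polynomial

/-- The characteristic polynomial (of the adjacency matrix) of a finite simple graph. -/
noncomputable def charPoly {V : Type*} [Finite V] (G : SimpleGraph V) : Polynomial ℤ :=
  letI := Fintype.ofFinite V
  letI := Classical.decEq V
  letI := Classical.decRel G.Adj
  (SimpleGraph.adjMatrix ℤ G).charpoly

/-- `G` is antipalindromic: writing `χ_G(λ) = Σ a_i λ^(n-i)`, we have `a_i = -a_(n-i)`. -/
def IsAntipalindromic {V : Type*} [Finite V] (G : SimpleGraph V) : Prop :=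
  ∀ i ≤ Nat.card V, (charPoly G).coeff i = -(charPoly G).coeff (Nat.card V - i)

/-- The hairing of `G`: attach a pendant vertex to every vertex of `G`.
Vertices `(u, false)` form the original graph and `(u, true)` is the pendant at `u`. -/
def hairing {V : Type*} (G : SimpleGraph V) : SimpleGraph (V × Bool) where
  Adj a b := (a.2 = false ∧ b.2 = false ∧ G.Adj a.1 b.1) ∨ (a.1 = b.1 ∧ a.2 ≠ b.2)
  symm := by
    constructor
    rintro a b (⟨ha, hb, hadj⟩ | ⟨h1, h2⟩)
    · exact Or.inl ⟨hb, ha, hadj.symm⟩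
    · exact Or.inr ⟨h1.symm, h2.symm⟩
  loopless := by
    constructor
    rintro a (⟨_, _, hadj⟩ | ⟨_, h⟩)
    · exact G.irrefl hadj
    · exact h rfl


namespace APX

set_option linter.unusedSectionVars false

open Finset

variable {V : Type*} [Fintype V] [DecidableEq V]


variable {V : Type*} [Fintype V] [DecidableEq V]

/-- An "adjacency involution" of `G`: an involutive permutation moving points only along
edges. These correspond to matchings of `G`. -/
def IsAI (G : SimpleGraph V) (σ : Equiv.Perm V) : Prop :=
  (∀ x, σ (σ x) = x) ∧ ∀ x, σ x = x ∨ G.Adj x (σ x)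

/-- number of fixed points -/
def fixc (σ : Equiv.Perm V) : ℕ := (univ.filter fun x => σ x = x).card

lemma even_aux (σ : Equiv.Perm V) (hσ : ∀ x, σ (σ x) = x) :
    ∀ s : Finset V, (∀ x ∈ s, σ x ∈ s ∧ σ x ≠ x) → Even s.card := by
  intro s
  induction s using Finset.strongInduction with
  | _ s ih =>
    intro hs
    rcases s.eq_empty_or_nonempty with rfl | ⟨x, hx⟩
    · simp
    · have hx1 := hs x hx
      have hne : σ x ≠ x := hx1.2
      have hmem : σ x ∈ s := hx1.1
      set t := s \ {x, σ x} with ht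
      have htsub : t ⊂ s := by
        refine Finset.sdiff_ssubset ?_ (by simp)
        intro y hy
        simp only [Finset.mem_insert, Finset.mem_singleton] at hy
        rcases hy with rfl | rfl <;> assumption
      have hts : Even t.card := by
        refine ih t htsub ?_
        intro y hy
        rw [ht, Finset.mem_sdiff] at hy
        obtain ⟨hys, hyn⟩ := hy
        simp only [Finset.mem_insert, Finset.mem_singleton] at hyn
        push_neg at hyn
        refine ⟨?_, (hs y hys).2⟩
        rw [ht, Finset.mem_sdiff]
        refine ⟨(hs y hys).1, ?_⟩
        simp only [Finset.mem_insert, Finset.mem_singleton]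
        push_neg
        constructor
        · intro h; exact hyn.2 (by rw [← h, hσ])
        · intro h; exact hyn.1 (σ.injective h)
      have hcard : s.card = t.card + 2 := by
        rw [ht, Finset.card_sdiff_of_subset (by
          intro y hy; simp only [Finset.mem_insert,
            Finset.mem_singleton] at hy; rcases hy with rfl | rfl <;> assumption)]
        have h2 : ({x, σ x} : Finset V).card = 2 := by
          rw [Finset.card_insert_of_notMem (by simpa using Ne.symm hne), Finset.card_singleton]
        rw [h2]
        have hle : 2 ≤ s.card := by
          have : ({x, σ x} : Finset V) ⊆ s := by
            intro y hy; simp only [Finset.mem_insert, Finset.mem_singleton] at hy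
            rcases hy with rfl | rfl <;> assumption
          calc 2 = ({x, σ x} : Finset V).card := h2.symm
          _ ≤ s.card := Finset.card_le_card this
        omega
      rw [hcard]
      exact hts.add (by decide)

lemma even_moved (σ : Equiv.Perm V) (hσ : ∀ x, σ (σ x) = x) :
    Even (univ.filter fun x => σ x ≠ x).card := by
  refine even_aux σ hσ _ ?_
  intro x hx
  simp only [Finset.mem_filter, Finset.mem_univ, true_and] at hx ⊢
  exact ⟨fun h => hx (by conv_lhs => rw [← h, hσ]), hx⟩

lemma fixc_add_moved (σ : Equiv.Perm V) :
    fixc σ + (univ.filter fun x => σ x ≠ x).card = Fintype.card V := by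
  rw [fixc]
  rw [Finset.card_filter_add_card_filter_not]
  rfl

/-- sign of an involution in terms of the number of moved points -/
lemma sign_invol (σ : Equiv.Perm V) (hσ : ∀ x, σ (σ x) = x) :
    Equiv.Perm.sign σ = (-1 : ℤˣ) ^ ((univ.filter fun x => σ x ≠ x).card / 2) := by
  generalize hk : (univ.filter fun x => σ x ≠ x).card = k
  induction k using Nat.strong_induction_on generalizing σ with
  | _ k ih =>
    rcases Nat.eq_zero_or_pos k with rfl | hpos
    · have : σ = 1 := by
        have hfix : ∀ x, σ x = x := by
          intro x
          by_contra h
          have hmem : x ∈ univ.filter fun y => σ y ≠ y := by simp [h]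
          rw [Finset.card_eq_zero] at hk
          simp [hk] at hmem
        exact Equiv.ext hfix
      simp [this]
    · have hne : ∃ x, σ x ≠ x := by
        by_contra h
        push_neg at h
        have : (univ.filter fun x => σ x ≠ x) = ∅ := by
          ext y; simp [h y]
        rw [this] at hk; simp at hk; omega
      obtain ⟨x, hx⟩ := hne
      set τ := Equiv.swap x (σ x) with hτ
      set σ' := σ * τ with hσ'
      have hσ'x : σ' x = x := by
        simp [hσ', hτ, Equiv.swap_apply_left, hσ]
      have hσ'sx : σ' (σ x) = σ x := by
        simp [hσ', hτ, Equiv.swap_apply_right]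
      have hσ'y : ∀ y, y ≠ x → y ≠ σ x → σ' y = σ y := by
        intro y h1 h2
        simp [hσ', hτ, Equiv.swap_apply_of_ne_of_ne h1 h2]
      have hσ'inv : ∀ y, σ' (σ' y) = y := by
        intro y
        rcases eq_or_ne y x with rfl | h1
        · rw [hσ'x, hσ'x]
        rcases eq_or_ne y (σ x) with rfl | h2
        · rw [hσ'sx, hσ'sx]
        · rw [hσ'y y h1 h2]
          have hne1 : σ y ≠ x := fun h => h2 (by rw [← h, hσ])
          have hne2 : σ y ≠ σ x := fun h => h1 (σ.injective h)
          rw [hσ'y _ hne1 hne2, hσ]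
      have hmoved : (univ.filter fun y => σ' y ≠ y) = (univ.filter fun y => σ y ≠ y) \ {x, σ x} := by
        ext y
        simp only [Finset.mem_filter, Finset.mem_univ, true_and, Finset.mem_sdiff,
          Finset.mem_insert, Finset.mem_singleton]
        constructor
        · intro h
          have h1 : y ≠ x := fun hh => h (by rw [hh]; exact hσ'x)
          have h2 : y ≠ σ x := fun hh => h (by rw [hh]; exact hσ'sx)
          rw [hσ'y y h1 h2] at h
          exact ⟨h, fun hh => (hh.elim h1 h2)⟩
        · rintro ⟨h, hn⟩
          push_neg at hn
          rw [hσ'y y hn.1 hn.2]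
          exact h
      have hcard' : (univ.filter fun y => σ' y ≠ y).card = k - 2 := by
        rw [hmoved, Finset.card_sdiff_of_subset]
        · rw [hk]
          congr 1
          rw [Finset.card_insert_of_notMem (by simpa using Ne.symm hx), Finset.card_singleton]
        · intro y hy
          simp only [Finset.mem_insert, Finset.mem_singleton] at hy
          simp only [Finset.mem_filter, Finset.mem_univ, true_and]
          rcases hy with rfl | rfl
          · exact hx
          · intro h; exact hx (by conv_lhs => rw [← h, hσ])
      have hk2 : 2 ≤ k := by
        have hev := even_moved σ hσ
        rw [hk] at hev
        rcases hev with ⟨c, hc⟩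
        omega
      have hsign := ih (k - 2) (by omega) σ' hσ'inv hcard'
      have : σ = σ' * τ := by
        rw [hσ', hτ, mul_assoc]
        simp
      rw [this, map_mul, hsign, Equiv.Perm.sign_swap (Ne.symm hx)]
      have : k / 2 = (k - 2) / 2 + 1 := by omega
      rw [this, pow_succ]

/-- In an acyclic graph, a permutation moving points only along edges is an involution. -/
lemma invol_of_adj (G : SimpleGraph V) (hG : G.IsAcyclic)
    (σ : Equiv.Perm V) (hadj : ∀ x, σ x = x ∨ G.Adj x (σ x)) : ∀ x, σ (σ x) = x := by
  intro i
  by_contra hii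
  have hne : σ i ≠ i := fun h => hii (by rw [h, h])
  have hper : i ∈ Function.periodicPts σ := by
    refine ⟨orderOf σ, orderOf_pos σ, ?_⟩
    show (⇑σ)^[orderOf σ] i = i
    rw [Equiv.Perm.iterate_eq_pow, pow_orderOf_eq_one]
    rfl
  set k := Function.minimalPeriod σ i with hkdef
  have hk0 : 0 < k := Function.minimalPeriod_pos_of_mem_periodicPts hper
  have hk1 : k ≠ 1 := by
    intro h
    exact hne (by simpa [Function.IsFixedPt] using
      (Function.minimalPeriod_eq_one_iff_isFixedPt.mp h))
  have hk2 : k ≠ 2 := by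
    intro h
    apply hii
    have := Function.iterate_minimalPeriod (f := ⇑σ) (x := i)
    rw [← hkdef, h] at this
    simpa [Function.iterate_succ_apply'] using this
  have hk3 : 3 ≤ k := by omega
  have hmoved : ∀ t : ℕ, σ ((⇑σ)^[t] i) ≠ (⇑σ)^[t] i := by
    intro t h
    have h1 : Function.minimalPeriod σ ((⇑σ)^[t] i) = 1 :=
      Function.minimalPeriod_eq_one_iff_isFixedPt.mpr h
    have h2 := Function.minimalPeriod_apply_iterate hper t
    rw [h1] at h2
    exact hk1 h2.symm
  have hadjt : ∀ t : ℕ, G.Adj ((⇑σ)^[t] i) ((⇑σ)^[t+1] i) := by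
    intro t
    rw [Function.iterate_succ_apply']
    rcases hadj ((⇑σ)^[t] i) with h | h
    · exact absurd h (hmoved t)
    · exact h
  have hinj : ∀ s t, s < k → t < k → (⇑σ)^[s] i = (⇑σ)^[t] i → s = t := by
    intro s t hs ht h
    exact Function.iterate_injOn_Iio_minimalPeriod (f := ⇑σ) (x := i) hs ht h
  -- build the long walk
  have hw : ∀ t : ℕ, ∃ p : G.Walk ((⇑σ)^[t] i) i,
      p.support = ((List.range (t+1)).reverse).map (fun s => (⇑σ)^[s] i) := by
    intro t
    induction t with
    | zero =>
      refine ⟨SimpleGraph.Walk.nil, ?_⟩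
      simp [List.range_succ]
    | succ t ih =>
      obtain ⟨p, hp⟩ := ih
      refine ⟨SimpleGraph.Walk.cons (hadjt t).symm p, ?_⟩
      rw [SimpleGraph.Walk.support_cons, hp]
      conv_rhs => rw [List.range_succ]
      simp [pow_succ, Equiv.Perm.mul_apply]
  obtain ⟨p, hp⟩ := hw (k - 1)
  have hksub : k - 1 + 1 = k := by omega
  rw [hksub] at hp
  have hnodup : p.support.Nodup := by
    rw [hp]
    refine List.Nodup.map_on ?_ (by simp [List.nodup_reverse, List.nodup_range])
    intro s hs t ht h
    simp only [List.mem_reverse, List.mem_range] at hs ht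
    exact hinj s t hs ht h
  have hpath : p.IsPath := (SimpleGraph.Walk.isPath_def p).mpr hnodup
  have hadjlast : G.Adj ((⇑σ)^[k-1] i) i := by
    have := hadjt (k - 1)
    rw [hksub] at this
    rwa [Function.iterate_minimalPeriod] at this
  have hq : (SimpleGraph.Walk.cons hadjlast SimpleGraph.Walk.nil).IsPath := by
    rw [SimpleGraph.Walk.isPath_def]
    simp only [SimpleGraph.Walk.support_cons, SimpleGraph.Walk.support_nil]
    refine List.nodup_cons.mpr ⟨?_, List.nodup_singleton i⟩
    simp only [List.mem_singleton]
    intro h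
    have := hinj (k-1) 0 (by omega) (by omega) (by simpa using h)
    omega
  have := SimpleGraph.isAcyclic_iff_path_unique.mp hG ⟨p, hpath⟩ ⟨_, hq⟩
  have hlen : p.length + 1 = k := by
    have := congrArg List.length hp
    rw [SimpleGraph.Walk.length_support] at this
    simpa using this
  have hlen2 : p.length = 1 := by
    have := congrArg (fun q : G.Path ((⇑σ)^[k-1] i) i => q.1.length) this
    simpa using this
  omega

variable (G : SimpleGraph V) [DecidableRel G.Adj]

instance : DecidablePred (IsAI G) := fun σ =>
  decidable_of_iff ((∀ x, σ (σ x) = x) ∧ ∀ x, σ x = x ∨ G.Adj x (σ x)) Iff.rfl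

def AIset : Finset (Equiv.Perm V) := univ.filter (fun σ => IsAI G σ)

def cnt (j : ℕ) : ℕ := (univ.filter (fun σ : Equiv.Perm V => IsAI G σ ∧ fixc σ = j)).card

theorem charpoly_AI (hG : G.IsAcyclic) :
    (G.adjMatrix ℤ).charpoly =
      ∑ σ ∈ AIset G, Equiv.Perm.sign σ • (X : ℤ[X]) ^ (fixc σ) := by
  rw [Matrix.charpoly, Matrix.det_apply]
  rw [← Finset.sum_filter_add_sum_filter_not univ (fun σ => IsAI G σ)]
  have h2 : ∑ σ ∈ univ.filter (fun σ : Equiv.Perm V => ¬ IsAI G σ),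
      Equiv.Perm.sign σ • ∏ i, (G.adjMatrix ℤ).charmatrix (σ i) i = 0 := by
    refine Finset.sum_eq_zero ?_
    intro σ hσ
    simp only [Finset.mem_filter, Finset.mem_univ, true_and] at hσ
    have : ∃ x, σ x ≠ x ∧ ¬ G.Adj x (σ x) := by
      by_contra h
      push_neg at h
      have hadj : ∀ x, σ x = x ∨ G.Adj x (σ x) := by
        intro x
        rcases eq_or_ne (σ x) x with he | hne
        · exact Or.inl he
        · exact Or.inr (h x hne)
      exact hσ ⟨invol_of_adj G hG σ hadj, hadj⟩
    obtain ⟨x, hx1, hx2⟩ := this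
    have : (G.adjMatrix ℤ).charmatrix (σ x) x = 0 := by
      rw [Matrix.charmatrix_apply_ne _ _ _ hx1]
      have : G.adjMatrix ℤ (σ x) x = 0 := by
        rw [SimpleGraph.adjMatrix_apply]
        simp only [ite_eq_right_iff]
        intro h
        exact absurd h.symm hx2
      rw [this]
      simp
    have hz : ∏ i, (G.adjMatrix ℤ).charmatrix (σ i) i = 0 :=
      Finset.prod_eq_zero (f := fun i => (G.adjMatrix ℤ).charmatrix (σ i) i)
        (Finset.mem_univ x) this
    rw [hz, smul_zero]
  rw [h2, add_zero]
  rw [AIset]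
  refine Finset.sum_congr rfl ?_
  intro σ hσ
  simp only [Finset.mem_filter, Finset.mem_univ, true_and] at hσ
  congr 1
  rw [← Finset.prod_filter_mul_prod_filter_not univ (fun x => σ x = x)]
  have hfix : ∏ i ∈ univ.filter (fun x => σ x = x), (G.adjMatrix ℤ).charmatrix (σ i) i
      = X ^ (fixc σ) := by
    rw [Finset.prod_congr rfl (g := fun _ => (X : ℤ[X])) ?_, Finset.prod_const, fixc]
    intro x hx
    simp only [Finset.mem_filter, Finset.mem_univ, true_and] at hx
    rw [hx, Matrix.charmatrix_apply_eq]
    simp [SimpleGraph.adjMatrix_apply]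
  have hmov : ∏ i ∈ univ.filter (fun x => ¬ σ x = x), (G.adjMatrix ℤ).charmatrix (σ i) i
      = 1 := by
    rw [Finset.prod_congr rfl (g := fun _ => (-1 : ℤ[X])) ?_, Finset.prod_const]
    · rcases even_moved σ hσ.1 with ⟨c, hc⟩
      have : (univ.filter fun x => σ x ≠ x).card = 2 * c := by omega
      rw [show (univ.filter fun x => ¬ σ x = x) = (univ.filter fun x => σ x ≠ x) from rfl, this]
      simp [pow_mul]
    · intro x hx
      simp only [Finset.mem_filter, Finset.mem_univ, true_and] at hx
      have hadj : G.Adj x (σ x) := (hσ.2 x).resolve_left hx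
      rw [Matrix.charmatrix_apply_ne _ _ _ hx]
      have : G.adjMatrix ℤ (σ x) x = 1 := by
        rw [SimpleGraph.adjMatrix_apply, if_pos hadj.symm]
      rw [this]
      simp
  rw [hfix, hmov, mul_one]

lemma coeff_charpoly_AI (hG : G.IsAcyclic) (j : ℕ) :
    ((G.adjMatrix ℤ).charpoly).coeff j =
      (-1 : ℤ) ^ ((Fintype.card V - j) / 2) * (cnt G j : ℤ) := by
  rw [charpoly_AI G hG, Polynomial.finset_sum_coeff]
  have h1 : ∀ σ ∈ AIset G, (Equiv.Perm.sign σ • (X : ℤ[X]) ^ (fixc σ)).coeff j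
      = if fixc σ = j then ((-1 : ℤ) ^ ((Fintype.card V - j) / 2)) else 0 := by
    intro σ hσ
    simp only [AIset, Finset.mem_filter, Finset.mem_univ, true_and] at hσ
    rw [Units.smul_def, Polynomial.coeff_smul, Polynomial.coeff_X_pow]
    by_cases h : fixc σ = j
    · rw [if_pos h, if_pos h.symm]
      have hmv : (univ.filter fun x => σ x ≠ x).card = Fintype.card V - j := by
        have := fixc_add_moved σ
        have hle : fixc σ ≤ Fintype.card V := by omega
        omega
      rw [sign_invol σ hσ.1, hmv]
      push_cast
      simp
    · rw [if_neg h, if_neg (fun hh => h hh.symm)]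
      simp
  rw [Finset.sum_congr rfl h1, ← Finset.sum_filter, Finset.sum_const]
  have h2 : (AIset G).filter (fun σ => fixc σ = j)
      = univ.filter (fun σ : Equiv.Perm V => IsAI G σ ∧ fixc σ = j) := by
    rw [AIset, Finset.filter_filter]
  rw [h2, nsmul_eq_mul, mul_comm, cnt]


section Hairing

variable {W : Type*} [Fintype W] [DecidableEq W] (S : SimpleGraph W) [DecidableRel S.Adj]

instance : DecidableRel (hairing S).Adj := fun a b =>
  decidable_of_iff ((a.2 = false ∧ b.2 = false ∧ S.Adj a.1 b.1) ∨ (a.1 = b.1 ∧ a.2 ≠ b.2)) Iff.rfl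

lemma hairing_adj {a b : W × Bool} :
    (hairing S).Adj a b ↔ (a.2 = false ∧ b.2 = false ∧ S.Adj a.1 b.1) ∨ (a.1 = b.1 ∧ a.2 ≠ b.2) :=
  Iff.rfl

lemma AI_cases {σ : Equiv.Perm (W × Bool)} (hσ : IsAI (hairing S) σ) (s : W) :
    (σ (s, false) = (s, false) ∧ σ (s, true) = (s, true))
    ∨ (σ (s, false) = (s, true) ∧ σ (s, true) = (s, false))
    ∨ (∃ t, S.Adj s t ∧ σ (s, false) = (t, false) ∧ σ (s, true) = (s, true)) := by
  obtain ⟨hinv, hadj⟩ := hσ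
  have htrue : σ (s, true) = (s, true) ∨ σ (s, true) = (s, false) := by
    rcases hadj (s, true) with h | h
    · exact Or.inl h
    · rcases (hairing_adj S).mp h with ⟨h1, _⟩ | ⟨h1, h2⟩
      · simp at h1
      · right
        have hb : (σ (s, true)).2 = false := by simpa using h2
        have ha : (σ (s, true)).1 = s := h1.symm
        exact Prod.ext_iff.mpr ⟨ha, hb⟩
  rcases hadj (s, false) with h0 | h0
  · left
    refine ⟨h0, ?_⟩
    rcases htrue with h | h
    · exact h
    · exfalso
      have := σ.injective (h.trans h0.symm)
      simp at this
  · rcases (hairing_adj S).mp h0 with ⟨_, h2, h3⟩ | ⟨h1, h2⟩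
    · right; right
      refine ⟨(σ (s, false)).1, h3, ?_, ?_⟩
      · exact Prod.ext_iff.mpr ⟨rfl, h2⟩
      · rcases htrue with h | h
        · exact h
        · exfalso
          have h4 : σ (s, false) = (s, true) := by
            rw [← h, hinv]
          rw [h4] at h2
          simp at h2
    · right; left
      have hb : (σ (s, false)).2 = true := by simpa using h2
      have hfa : σ (s, false) = (s, true) := Prod.ext_iff.mpr ⟨h1.symm, hb⟩
      refine ⟨hfa, ?_⟩
      rw [← hfa, hinv]

def phiFun (σ : Equiv.Perm (W × Bool)) : W × Bool → W × Bool := fun p =>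
  if p.2 = true then (if σ (p.1, false) = (p.1, false) then (p.1, false) else p)
  else (if σ (p.1, false) = (p.1, false) then (p.1, true)
        else if (σ (p.1, false)).2 = true then (p.1, false) else σ (p.1, false))

variable {S}

lemma phiFun_A_false {σ : Equiv.Perm (W × Bool)} {s : W} (h : σ (s, false) = (s, false)) :
    phiFun σ (s, false) = (s, true) := by simp [phiFun, h]

lemma phiFun_A_true {σ : Equiv.Perm (W × Bool)} {s : W} (h : σ (s, false) = (s, false)) :
    phiFun σ (s, true) = (s, false) := by simp [phiFun, h]

lemma phiFun_B_false {σ : Equiv.Perm (W × Bool)} {s : W} (h : σ (s, false) = (s, true)) :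
    phiFun σ (s, false) = (s, false) := by simp [phiFun, h]

lemma phiFun_B_true {σ : Equiv.Perm (W × Bool)} {s : W} (h : σ (s, false) = (s, true)) :
    phiFun σ (s, true) = (s, true) := by simp [phiFun, h]

lemma phiFun_C_false {σ : Equiv.Perm (W × Bool)} {s t : W} (hst : s ≠ t)
    (h : σ (s, false) = (t, false)) : phiFun σ (s, false) = (t, false) := by
  simp [phiFun, h, Prod.ext_iff, hst, Ne.symm hst]

lemma phiFun_C_true {σ : Equiv.Perm (W × Bool)} {s t : W} (hst : s ≠ t)
    (h : σ (s, false) = (t, false)) : phiFun σ (s, true) = (s, true) := by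
  simp [phiFun, h, Prod.ext_iff, hst, Ne.symm hst]

lemma phi_invol {σ : Equiv.Perm (W × Bool)} (hσ : IsAI (hairing S) σ) :
    Function.Involutive (phiFun σ) := by
  rintro ⟨s, b⟩
  rcases AI_cases S hσ s with ⟨h1, h2⟩ | ⟨h1, h2⟩ | ⟨t, hst, h1, h2⟩
  · cases b
    · rw [phiFun_A_false h1, phiFun_A_true h1]
    · rw [phiFun_A_true h1, phiFun_A_false h1]
  · cases b
    · rw [phiFun_B_false h1, phiFun_B_false h1]
    · rw [phiFun_B_true h1, phiFun_B_true h1]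
  · have hne : s ≠ t := (S.ne_of_adj hst)
    have hts : σ (t, false) = (s, false) := by rw [← h1, hσ.1]
    cases b
    · rw [phiFun_C_false hne h1, phiFun_C_false hne.symm hts]
    · rw [phiFun_C_true hne h1, phiFun_C_true hne h1]

def phiPerm (σ : Equiv.Perm (W × Bool)) (hσ : IsAI (hairing S) σ) : Equiv.Perm (W × Bool) :=
  (phi_invol hσ).toPerm _

lemma phiPerm_apply {σ : Equiv.Perm (W × Bool)} (hσ : IsAI (hairing S) σ) (p : W × Bool) :
    phiPerm σ hσ p = phiFun σ p := rfl

lemma phiPerm_AI {σ : Equiv.Perm (W × Bool)} (hσ : IsAI (hairing S) σ) :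
    IsAI (hairing S) (phiPerm σ hσ) := by
  constructor
  · intro x; exact phi_invol hσ x
  · rintro ⟨s, b⟩
    rcases AI_cases S hσ s with ⟨h1, h2⟩ | ⟨h1, h2⟩ | ⟨t, hst, h1, h2⟩
    · cases b
      · right
        rw [phiPerm_apply, phiFun_A_false h1]
        exact (hairing_adj S).mpr (Or.inr ⟨rfl, by simp⟩)
      · right
        rw [phiPerm_apply, phiFun_A_true h1]
        exact (hairing_adj S).mpr (Or.inr ⟨rfl, by simp⟩)
    · cases b
      · left; rw [phiPerm_apply, phiFun_B_false h1]
      · left; rw [phiPerm_apply, phiFun_B_true h1]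
    · have hne : s ≠ t := S.ne_of_adj hst
      cases b
      · right
        rw [phiPerm_apply, phiFun_C_false hne h1]
        exact (hairing_adj S).mpr (Or.inl ⟨rfl, rfl, hst⟩)
      · left; rw [phiPerm_apply, phiFun_C_true hne h1]

lemma phiPerm_phiPerm {σ : Equiv.Perm (W × Bool)} (hσ : IsAI (hairing S) σ)
    (hσ' : IsAI (hairing S) (phiPerm σ hσ)) :
    phiPerm (phiPerm σ hσ) hσ' = σ := by
  apply Equiv.ext
  rintro ⟨s, b⟩
  rcases AI_cases S hσ s with ⟨h1, h2⟩ | ⟨h1, h2⟩ | ⟨t, hst, h1, h2⟩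
  · have k1 : (phiPerm σ hσ) (s, false) = (s, true) := phiFun_A_false h1
    cases b
    · rw [phiPerm_apply, phiFun_B_false k1, h1]
    · rw [phiPerm_apply, phiFun_B_true k1, h2]
  · have k1 : (phiPerm σ hσ) (s, false) = (s, false) := phiFun_B_false h1
    cases b
    · rw [phiPerm_apply, phiFun_A_false k1, h1]
    · rw [phiPerm_apply, phiFun_A_true k1, h2]
  · have hne : s ≠ t := S.ne_of_adj hst
    have k1 : (phiPerm σ hσ) (s, false) = (t, false) := phiFun_C_false hne h1
    cases b
    · rw [phiPerm_apply, phiFun_C_false hne k1, h1]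
    · rw [phiPerm_apply, phiFun_C_true hne k1, h2]

lemma fixc_pair (σ : Equiv.Perm (W × Bool)) :
    fixc σ = ∑ s : W, ((if σ (s, false) = (s, false) then 1 else 0)
      + (if σ (s, true) = (s, true) then 1 else 0)) := by
  rw [fixc, Finset.card_filter, Fintype.sum_prod_type]
  refine Finset.sum_congr rfl ?_
  intro s _
  rw [Fintype.sum_bool]
  ring

lemma fixc_phi_add {σ : Equiv.Perm (W × Bool)} (hσ : IsAI (hairing S) σ) :
    fixc (phiPerm σ hσ) + fixc σ = 2 * Fintype.card W := by
  rw [fixc_pair, fixc_pair, ← Finset.sum_add_distrib]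
  have : ∀ s : W, (((if (phiPerm σ hσ) (s, false) = (s, false) then 1 else 0)
      + (if (phiPerm σ hσ) (s, true) = (s, true) then 1 else 0))
      + ((if σ (s, false) = (s, false) then 1 else 0)
      + (if σ (s, true) = (s, true) then 1 else 0))) = 2 := by
    intro s
    rcases AI_cases S hσ s with ⟨h1, h2⟩ | ⟨h1, h2⟩ | ⟨t, hst, h1, h2⟩
    · rw [phiPerm_apply, phiPerm_apply, phiFun_A_false h1, phiFun_A_true h1]
      simp [h1, h2, Prod.ext_iff]
    · have hne1 : ((s, true) : W × Bool) ≠ (s, false) := by simp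
      have hne2 : ((s, false) : W × Bool) ≠ (s, true) := by simp
      rw [phiPerm_apply, phiPerm_apply, phiFun_B_false h1, phiFun_B_true h1]
      simp [h1, h2]
    · have hne : s ≠ t := S.ne_of_adj hst
      rw [phiPerm_apply, phiPerm_apply, phiFun_C_false hne h1, phiFun_C_true hne h1]
      simp [h1, h2, Prod.ext_iff, hne.symm, Ne.symm hne]
  rw [Finset.sum_congr rfl (fun s _ => this s), Finset.sum_const, Finset.card_univ,
    smul_eq_mul, mul_comm]

lemma cnt_hairing_symm (j : ℕ) (hj : j ≤ 2 * Fintype.card W) :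
    cnt (hairing S) j = cnt (hairing S) (2 * Fintype.card W - j) := by
  rw [cnt, cnt]
  refine Finset.card_bij (fun σ hσ => phiPerm σ (by
    simp only [Finset.mem_filter, Finset.mem_univ, true_and] at hσ; exact hσ.1)) ?_ ?_ ?_
  · intro σ hσ
    simp only [Finset.mem_filter, Finset.mem_univ, true_and] at hσ ⊢
    refine ⟨phiPerm_AI hσ.1, ?_⟩
    have := fixc_phi_add (σ := σ) hσ.1
    omega
  · intro a ha b hb h
    simp only [Finset.mem_filter, Finset.mem_univ, true_and] at ha hb
    have h1 : phiPerm (phiPerm a ha.1) (phiPerm_AI ha.1) = a := phiPerm_phiPerm ha.1 _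
    have h2 : phiPerm (phiPerm b hb.1) (phiPerm_AI hb.1) = b := phiPerm_phiPerm hb.1 _
    rw [← h1, ← h2]
    congr 1
  · intro τ hτ
    simp only [Finset.mem_filter, Finset.mem_univ, true_and] at hτ
    refine ⟨phiPerm τ hτ.1, ?_, ?_⟩
    · simp only [Finset.mem_filter, Finset.mem_univ, true_and]
      refine ⟨phiPerm_AI hτ.1, ?_⟩
      have := fixc_phi_add (σ := τ) hτ.1
      omega
    · exact phiPerm_phiPerm hτ.1 _

end Hairing

section Iso

variable {V : Type*} {W' : Type*} [Fintype V] [DecidableEq V] [Fintype W'] [DecidableEq W']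

lemma IsAI_congr {G : SimpleGraph V} [DecidableRel G.Adj] {H : SimpleGraph W'}
    [DecidableRel H.Adj] (f : V ≃ W') (hf : ∀ a b, G.Adj a b → H.Adj (f a) (f b))
    {σ : Equiv.Perm V} (h : IsAI G σ) : IsAI H (f.permCongr σ) := by
  obtain ⟨hinv, hadj⟩ := h
  refine ⟨?_, ?_⟩
  · intro x
    simp only [Equiv.permCongr_apply, Equiv.symm_apply_apply]
    rw [hinv, Equiv.apply_symm_apply]
  · intro x
    rcases hadj (f.symm x) with h | h
    · left
      simp only [Equiv.permCongr_apply]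
      rw [h, Equiv.apply_symm_apply]
    · right
      simp only [Equiv.permCongr_apply]
      have h2 := hf _ _ h
      rwa [Equiv.apply_symm_apply] at h2

lemma fixc_permCongr (e : V ≃ W') (σ : Equiv.Perm V) : fixc (e.permCongr σ) = fixc σ := by
  rw [fixc, fixc]
  refine Finset.card_bij (fun x _ => e.symm x) ?_ ?_ ?_
  · intro x hx
    simp only [Finset.mem_filter, Finset.mem_univ, true_and] at hx ⊢
    rw [Equiv.permCongr_apply] at hx
    have := congrArg e.symm hx
    simpa using this
  · intro a _ b _ h
    exact e.symm.injective h
  · intro y hy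
    simp only [Finset.mem_filter, Finset.mem_univ, true_and] at hy ⊢
    exact ⟨e y, by simp [Equiv.permCongr_apply, hy], by simp⟩

lemma cnt_congr (G : SimpleGraph V) [DecidableRel G.Adj] (H : SimpleGraph W')
    [DecidableRel H.Adj] (f : V ≃ W') (hf : ∀ a b, G.Adj a b ↔ H.Adj (f a) (f b)) (j : ℕ) :
    cnt G j = cnt H j := by
  have hf2 : ∀ a b, H.Adj a b → G.Adj (f.symm a) (f.symm b) := by
    intro a b h
    have h2 := hf (f.symm a) (f.symm b)
    rw [Equiv.apply_symm_apply, Equiv.apply_symm_apply] at h2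
    exact h2.mpr h
  rw [cnt, cnt]
  refine Finset.card_bij (fun σ _ => f.permCongr σ) ?_ ?_ ?_
  · intro σ hσ
    simp only [Finset.mem_filter, Finset.mem_univ, true_and] at hσ ⊢
    exact ⟨IsAI_congr f (fun a b h => (hf a b).mp h) hσ.1,
      by rw [fixc_permCongr]; exact hσ.2⟩
  · intro a _ b _ h
    exact (Equiv.permCongr f).injective h
  · intro τ hτ
    simp only [Finset.mem_filter, Finset.mem_univ, true_and] at hτ
    refine ⟨f.symm.permCongr τ, ?_, ?_⟩
    · simp only [Finset.mem_filter, Finset.mem_univ, true_and]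
      exact ⟨IsAI_congr f.symm hf2 hτ.1, by rw [fixc_permCongr]; exact hτ.2⟩
    · apply Equiv.ext
      intro x
      simp [Equiv.permCongr_apply]

lemma cnt_facts (G : SimpleGraph V) [DecidableRel G.Adj] (j : ℕ) (h : cnt G j ≠ 0) :
    j ≤ Fintype.card V ∧ Even (Fintype.card V - j) := by
  rw [cnt] at h
  obtain ⟨σ, hσ⟩ := Finset.card_ne_zero.mp h
  simp only [Finset.mem_filter, Finset.mem_univ, true_and] at hσ
  obtain ⟨hAI, hfix⟩ := hσ
  have h1 : fixc σ ≤ Fintype.card V := by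
    rw [fixc, ← Finset.card_univ]
    exact Finset.card_filter_le _ _
  have h2 := fixc_add_moved σ
  have h3 := even_moved σ hAI.1
  constructor
  · omega
  · have h4 : Fintype.card V - j = (univ.filter fun x => σ x ≠ x).card := by omega
    rw [h4]
    exact h3

lemma forward_coeff {W : Type*} [Fintype W] [DecidableEq W]
    (T : SimpleGraph V) [DecidableRel T.Adj] (hT : T.IsAcyclic)
    (S : SimpleGraph W) [DecidableRel S.Adj] (hodd : Odd (Fintype.card W))
    (e : T ≃g hairing S) :
    ∀ i ≤ Fintype.card V,
      (T.adjMatrix ℤ).charpoly.coeff i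
        = -((T.adjMatrix ℤ).charpoly.coeff (Fintype.card V - i)) := by
  intro i hi
  have hfe : ∀ a b, T.Adj a b ↔ (hairing S).Adj (e.toEquiv a) (e.toEquiv b) :=
    fun a b => (e.map_adj_iff (v := a) (w := b)).symm
  have hcard : Fintype.card V = 2 * Fintype.card W := by
    rw [Fintype.card_congr e.toEquiv, Fintype.card_prod, Fintype.card_bool]
    ring
  have hcnt : cnt T i = cnt T (Fintype.card V - i) :=
    calc cnt T i = cnt (hairing S) i := cnt_congr T (hairing S) e.toEquiv hfe i
    _ = cnt (hairing S) (2 * Fintype.card W - i) := cnt_hairing_symm (S := S) i (by omega)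
    _ = cnt (hairing S) (Fintype.card V - i) := by rw [hcard]
    _ = cnt T (Fintype.card V - i) := (cnt_congr T (hairing S) e.toEquiv hfe _).symm
  rw [coeff_charpoly_AI T hT i, coeff_charpoly_AI T hT (Fintype.card V - i), ← hcnt]
  rcases Nat.eq_zero_or_pos (cnt T i) with h0 | hpos
  · rw [h0]; simp
  · obtain ⟨hle, hev⟩ := cnt_facts T i (by omega)
    obtain ⟨c, hc⟩ := hev
    have hNi : Fintype.card V - (Fintype.card V - i) = i := by omega
    rw [hNi]
    obtain ⟨w, hw⟩ := hodd
    rcases Nat.even_or_odd ((Fintype.card V - i) / 2) with hp | hp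
    · have hq : Odd (i / 2) := by
        rcases Nat.even_or_odd (i / 2) with h | h
        · exfalso
          obtain ⟨a, ha⟩ := hp
          obtain ⟨b, hb⟩ := h
          omega
        · exact h
      rw [Even.neg_one_pow hp, Odd.neg_one_pow hq]
      ring
    · have hq : Even (i / 2) := by
        rcases Nat.even_or_odd (i / 2) with h | h
        · exact h
        · exfalso
          obtain ⟨a, ha⟩ := hp
          obtain ⟨b, hb⟩ := h
          omega
      rw [Odd.neg_one_pow hp, Even.neg_one_pow hq]
      ring

end Iso

section Converse

variable {V : Type*} [Fintype V] [DecidableEq V]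

lemma cnt_card_eq_one (T : SimpleGraph V) [DecidableRel T.Adj] :
    cnt T (Fintype.card V) = 1 := by
  rw [cnt]
  have h : univ.filter (fun σ : Equiv.Perm V => IsAI T σ ∧ fixc σ = Fintype.card V) = {1} := by
    ext σ
    simp only [Finset.mem_filter, Finset.mem_univ, true_and, Finset.mem_singleton]
    constructor
    · rintro ⟨hAI, hfix⟩
      have hful : univ.filter (fun x => σ x = x) = univ :=
        Finset.eq_univ_of_card _ hfix
      have hall : ∀ x, σ x = x := by
        intro x
        have hx := Finset.mem_univ x
        rw [← hful] at hx
        simpa using hx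
      exact Equiv.ext hall
    · rintro rfl
      refine ⟨⟨by simp, fun x => Or.inl rfl⟩, ?_⟩
      rw [fixc]
      simp
  rw [h, Finset.card_singleton]

lemma no_triangle {T : SimpleGraph V} (hG : T.IsAcyclic) {x y z : V}
    (h1 : T.Adj x y) (h2 : T.Adj y z) (h3 : T.Adj x z) : False := by
  have hxy := h1.ne
  have hyz := h2.ne
  have hxz := h3.ne
  set p1 : T.Walk x z := SimpleGraph.Walk.cons h3 SimpleGraph.Walk.nil with hp1def
  have hp1 : p1.IsPath := by
    rw [SimpleGraph.Walk.isPath_def]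
    simp [hp1def, hxz]
  set p2 : T.Walk x z := SimpleGraph.Walk.cons h1 (SimpleGraph.Walk.cons h2 SimpleGraph.Walk.nil)
    with hp2def
  have hp2 : p2.IsPath := by
    rw [SimpleGraph.Walk.isPath_def]
    simp [hp2def, hxy, hyz, hxz]
  have := SimpleGraph.isAcyclic_iff_path_unique.mp hG ⟨p1, hp1⟩ ⟨p2, hp2⟩
  have hlen : p1.length = p2.length := by
    have h4 : p1 = p2 := congrArg Subtype.val this
    rw [h4]
  simp [hp1def, hp2def] at hlen

/-- Patch a permutation on a finite set. -/
def patch (σ₀ : Equiv.Perm V) (s : Finset V) (g : V → V) : V → V := fun w =>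
  if w ∈ s then g w else σ₀ w

lemma patch_invol (σ₀ : Equiv.Perm V) (h0 : ∀ w, σ₀ (σ₀ w) = w) (s : Finset V)
    (hs : ∀ w ∈ s, σ₀ w ∈ s) (g : V → V) (hg : ∀ w ∈ s, g w ∈ s ∧ g (g w) = w) :
    Function.Involutive (patch σ₀ s g) := by
  intro w
  by_cases h : w ∈ s
  · simp [patch, h, (hg w h).1, (hg w h).2]
  · have h2 : σ₀ w ∉ s := by
      intro hc
      have := hs _ hc
      rw [h0 w] at this
      exact h this
    simp [patch, h, h2, h0]

noncomputable def patchPerm (σ₀ : Equiv.Perm V) (s : Finset V) (g : V → V) : Equiv.Perm V :=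
  letI := Classical.dec (Function.Involutive (patch σ₀ s g))
  if h : Function.Involutive (patch σ₀ s g) then h.toPerm _ else 1

lemma patchPerm_apply (σ₀ : Equiv.Perm V) (s : Finset V) (g : V → V)
    (h : Function.Involutive (patch σ₀ s g)) (w : V) :
    patchPerm σ₀ s g w = if w ∈ s then g w else σ₀ w := by
  rw [patchPerm]
  letI := Classical.dec (Function.Involutive (patch σ₀ s g))
  rw [dif_pos h]
  rfl

lemma patch_AI {T : SimpleGraph V} [DecidableRel T.Adj] (σ₀ : Equiv.Perm V)
    (hAI0 : IsAI T σ₀) (s : Finset V) (hs : ∀ w ∈ s, σ₀ w ∈ s) (g : V → V)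
    (hg : ∀ w ∈ s, g w ∈ s ∧ g (g w) = w)
    (hadj : ∀ w ∈ s, g w = w ∨ T.Adj w (g w)) :
    IsAI T (patchPerm σ₀ s g) := by
  have hinv := patch_invol σ₀ hAI0.1 s hs g hg
  constructor
  · intro w
    rw [patchPerm_apply _ _ _ hinv, patchPerm_apply _ _ _ hinv]
    exact hinv w
  · intro w
    rw [patchPerm_apply _ _ _ hinv]
    by_cases h : w ∈ s
    · rw [if_pos h]
      exact hadj w h
    · rw [if_neg h]
      exact hAI0.2 w

lemma patch_fixc (σ₀ : Equiv.Perm V) (hnf : ∀ w, σ₀ w ≠ w) (s : Finset V) (g : V → V)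
    (h : Function.Involutive (patch σ₀ s g)) :
    fixc (patchPerm σ₀ s g) = (s.filter (fun w => g w = w)).card := by
  rw [fixc]
  congr 1
  ext w
  simp only [Finset.mem_filter, Finset.mem_univ, true_and]
  rw [patchPerm_apply _ _ _ h]
  by_cases hw : w ∈ s
  · simp [hw]
  · simp [hw, hnf w]

/-- An adjacency involution with exactly two moved points is a swap along an edge. -/
lemma swap_structure {T : SimpleGraph V} [DecidableRel T.Adj] {σ : Equiv.Perm V}
    (hAI : IsAI T σ) (hmoved : (univ.filter fun w => σ w ≠ w).card = 2) :
    ∃ u v, T.Adj u v ∧ σ = Equiv.swap u v := by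
  have hne : (univ.filter fun w => σ w ≠ w).Nonempty := by
    rw [← Finset.card_pos, hmoved]; omega
  obtain ⟨x, hx⟩ := hne
  simp only [Finset.mem_filter, Finset.mem_univ, true_and] at hx
  have hx2 : σ (σ x) ≠ σ x := by
    rw [hAI.1 x]
    exact fun h => hx h.symm
  have hsub : ({x, σ x} : Finset V) ⊆ univ.filter fun w => σ w ≠ w := by
    intro w hw
    simp only [Finset.mem_insert, Finset.mem_singleton] at hw
    simp only [Finset.mem_filter, Finset.mem_univ, true_and]
    rcases hw with rfl | rfl
    · exact hx
    · exact hx2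
  have hcard2 : ({x, σ x} : Finset V).card = 2 := by
    rw [Finset.card_insert_of_notMem (by simpa using fun h => hx h.symm),
      Finset.card_singleton]
  have heq : ({x, σ x} : Finset V) = univ.filter fun w => σ w ≠ w :=
    Finset.eq_of_subset_of_card_le hsub (by omega)
  refine ⟨x, σ x, (hAI.2 x).resolve_left hx, ?_⟩
  apply Equiv.ext
  intro w
  by_cases h1 : w = x
  · rw [h1, Equiv.swap_apply_left]
  by_cases h2 : w = σ x
  · rw [h2, Equiv.swap_apply_right, hAI.1]
  · rw [Equiv.swap_apply_of_ne_of_ne h1 h2]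
    by_contra h3
    have : w ∈ ({x, σ x} : Finset V) := by
      rw [heq]
      simp only [Finset.mem_filter, Finset.mem_univ, true_and]
      exact h3
    simp only [Finset.mem_insert, Finset.mem_singleton] at this
    exact absurd this (by tauto)

end Converse

section Pendant

variable {V : Type*} [Fintype V] [DecidableEq V]

/-- Exchange two pairs: `p ↔ q` and `r ↔ t`. -/
def flip2 (p q r t : V) : V → V := fun w =>
  if w = p then q else if w = q then p else if w = r then t else if w = t then r else w

lemma flip2_inv {p q r t : V} (hpq : p ≠ q) (hrt : r ≠ t) (hpr : p ≠ r) (hpt : p ≠ t)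
    (hqr : q ≠ r) (hqt : q ≠ t) : ∀ w, flip2 p q r t (flip2 p q r t w) = w := by
  intro w
  by_cases h1 : w = p
  · simp [flip2, h1, hpq, hpq.symm, hqr, hqt]
  by_cases h2 : w = q
  · simp [flip2, h2, hpq, hpq.symm, hpr, hpt]
  by_cases h3 : w = r
  · simp [flip2, h3, hpr.symm, hqr.symm, hrt, hrt.symm, hpt.symm, hqt.symm]
  by_cases h4 : w = t
  · simp [flip2, h4, hpt.symm, hqt.symm, hrt, hrt.symm, hpr.symm, hqr.symm]
  · simp [flip2, h1, h2, h3, h4]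

/-- A second fixed-point-free adjacency involution, given a "recombination". -/
lemma q_facts {T : SimpleGraph V} [DecidableRel T.Adj] {σ₀ : Equiv.Perm V}
    (hAI0 : IsAI T σ₀) (hnf : ∀ w, σ₀ w ≠ w) {x a : V}
    (hax : T.Adj x a) (hya : T.Adj (σ₀ x) (σ₀ a)) (hay : a ≠ σ₀ x) :
    ∃ σ₁, IsAI T σ₁ ∧ fixc σ₁ = 0 ∧ σ₁ x = a := by
  have h0 := hAI0.1
  have hxa : x ≠ a := hax.ne
  have hxsx : x ≠ σ₀ x := (hnf x).symm
  have hasa : a ≠ σ₀ a := (hnf a).symm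
  have hxsa : x ≠ σ₀ a := by
    intro h
    apply hay
    rw [h, h0]
  have hsxsa : σ₀ x ≠ σ₀ a := fun h => hxa (σ₀.injective h)
  set s : Finset V := {x, a, σ₀ x, σ₀ a} with hs
  set g : V → V := flip2 x a (σ₀ x) (σ₀ a) with hg
  have hgx : g x = a := by simp [hg, flip2]
  have hga : g a = x := by simp [hg, flip2, hxa.symm]
  have hgsx : g (σ₀ x) = σ₀ a := by simp [hg, flip2, hxsx.symm, Ne.symm hay]
  have hgsa : g (σ₀ a) = σ₀ x := by simp [hg, flip2, hxsa.symm, hasa.symm, hsxsa.symm]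
  have hclosed : ∀ w ∈ s, σ₀ w ∈ s := by
    intro w hw
    simp only [hs, Finset.mem_insert, Finset.mem_singleton] at hw ⊢
    rcases hw with rfl | rfl | rfl | rfl
    · tauto
    · tauto
    · rw [h0]; tauto
    · rw [h0]; tauto
  have hmem : ∀ w ∈ s, g w ∈ s ∧ g (g w) = w := by
    intro w hw
    simp only [hs, Finset.mem_insert, Finset.mem_singleton] at hw
    rcases hw with rfl | rfl | rfl | rfl
    · rw [hgx, hga]; simp [hs]
    · rw [hga, hgx]; simp [hs]
    · rw [hgsx, hgsa]; simp [hs]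
    · rw [hgsa, hgsx]; simp [hs]
  have hadj : ∀ w ∈ s, g w = w ∨ T.Adj w (g w) := by
    intro w hw
    simp only [hs, Finset.mem_insert, Finset.mem_singleton] at hw
    rcases hw with rfl | rfl | rfl | rfl
    · rw [hgx]; exact Or.inr hax
    · rw [hga]; exact Or.inr hax.symm
    · rw [hgsx]; exact Or.inr hya
    · rw [hgsa]; exact Or.inr hya.symm
  have hinv := patch_invol σ₀ h0 s hclosed g hmem
  refine ⟨patchPerm σ₀ s g, patch_AI σ₀ hAI0 s hclosed g hmem hadj, ?_, ?_⟩
  · rw [patch_fixc σ₀ hnf s g hinv]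
    rw [Finset.card_eq_zero]
    ext w
    simp only [Finset.mem_filter, Finset.notMem_empty, iff_false]
    rintro ⟨hw, hfix⟩
    simp only [hs, Finset.mem_insert, Finset.mem_singleton] at hw
    rcases hw with rfl | rfl | rfl | rfl
    · rw [hgx] at hfix; exact hxa hfix.symm
    · rw [hga] at hfix; exact hxa hfix
    · rw [hgsx] at hfix; exact hsxsa hfix.symm
    · rw [hgsa] at hfix; exact hsxsa hfix
  · rw [patchPerm_apply _ _ _ hinv, if_pos (by simp [hs]), hgx]

/-- Facts about the "matched-edge" modification: fix the two ends of a matched edge. -/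
lemma Jmatched_facts {T : SimpleGraph V} [DecidableRel T.Adj] {σ₀ : Equiv.Perm V}
    (hAI0 : IsAI T σ₀) (hnf : ∀ w, σ₀ w ≠ w) {u v : V} (huv : T.Adj u v) (hm : σ₀ u = v) :
    IsAI T (patchPerm σ₀ {u, v} id) ∧ fixc (patchPerm σ₀ {u, v} id) = 2 ∧
      (univ.filter fun w => patchPerm σ₀ {u, v} id w ≠ σ₀ w ∧ patchPerm σ₀ {u, v} id w ≠ w) = ∅ ∧
      (univ.filter fun w => patchPerm σ₀ {u, v} id w ≠ σ₀ w) = {u, v} := by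
  have h0 := hAI0.1
  have huv' : u ≠ v := huv.ne
  have hclosed : ∀ w ∈ ({u, v} : Finset V), σ₀ w ∈ ({u, v} : Finset V) := by
    intro w hw
    simp only [Finset.mem_insert, Finset.mem_singleton] at hw ⊢
    rcases hw with rfl | rfl
    · rw [hm]; tauto
    · rw [← hm, h0]; tauto
  have hmem : ∀ w ∈ ({u, v} : Finset V), id w ∈ ({u, v} : Finset V) ∧ id (id w) = w :=
    fun w hw => ⟨hw, rfl⟩
  have hinv := patch_invol σ₀ h0 _ hclosed id hmem
  have happ : ∀ w, patchPerm σ₀ {u, v} id w = if w ∈ ({u, v} : Finset V) then w else σ₀ w := by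
    intro w
    rw [patchPerm_apply _ _ _ hinv]
    by_cases h : w ∈ ({u, v} : Finset V) <;> simp [h]
  refine ⟨patch_AI σ₀ hAI0 _ hclosed id hmem (fun w _ => Or.inl rfl), ?_, ?_, ?_⟩
  · rw [patch_fixc σ₀ hnf _ id hinv]
    have hft : Finset.filter (fun w => id w = w) ({u, v} : Finset V) = {u, v} :=
      Finset.filter_true_of_mem (fun w _ => rfl)
    rw [hft, Finset.card_insert_of_notMem (by simpa using huv'), Finset.card_singleton]
  · ext w
    simp only [Finset.mem_filter, Finset.mem_univ, true_and, Finset.notMem_empty, iff_false]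
    rintro ⟨h1, h2⟩
    rw [happ] at h1 h2
    by_cases h : w ∈ ({u, v} : Finset V)
    · rw [if_pos h] at h2; exact h2 rfl
    · rw [if_neg h] at h1; exact h1 rfl
  · ext w
    simp only [Finset.mem_filter, Finset.mem_univ, true_and]
    rw [happ]
    by_cases h : w ∈ ({u, v} : Finset V)
    · rw [if_pos h]
      simpa [h] using (hnf w).symm
    · rw [if_neg h]
      simpa [h] using fun hc => (hc rfl).elim
end Pendant

section Pendant2

variable {V : Type*} [Fintype V] [DecidableEq V]

/-- Facts about the "unmatched-edge" modification. -/
lemma Jnon_facts {T : SimpleGraph V} [DecidableRel T.Adj] {σ₀ : Equiv.Perm V}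
    (hAI0 : IsAI T σ₀) (hnf : ∀ w, σ₀ w ≠ w) {u v : V} (huv : T.Adj u v) (hm : σ₀ u ≠ v) :
    IsAI T (patchPerm σ₀ {u, v, σ₀ u, σ₀ v}
        (fun w => if w = u then v else if w = v then u else w))
    ∧ fixc (patchPerm σ₀ {u, v, σ₀ u, σ₀ v}
        (fun w => if w = u then v else if w = v then u else w)) = 2
    ∧ (univ.filter fun w => patchPerm σ₀ {u, v, σ₀ u, σ₀ v}
        (fun w => if w = u then v else if w = v then u else w) w ≠ σ₀ w
        ∧ patchPerm σ₀ {u, v, σ₀ u, σ₀ v}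
        (fun w => if w = u then v else if w = v then u else w) w ≠ w) = {u, v} := by
  have h0 := hAI0.1
  have huv' : u ≠ v := huv.ne
  have hsuu : σ₀ u ≠ u := hnf u
  have hsvv : σ₀ v ≠ v := hnf v
  have hsvu : σ₀ v ≠ u := by
    intro h
    apply hm
    rw [← h, h0]
  have hss : σ₀ u ≠ σ₀ v := fun h => huv' (σ₀.injective h)
  set s : Finset V := {u, v, σ₀ u, σ₀ v} with hs
  set g : V → V := (fun w => if w = u then v else if w = v then u else w) with hg
  have hgu : g u = v := by simp [hg]
  have hgv : g v = u := by simp [hg, huv'.symm]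
  have hgsu : g (σ₀ u) = σ₀ u := by simp [hg, hsuu, hm]
  have hgsv : g (σ₀ v) = σ₀ v := by simp [hg, hsvv, hsvu]
  have hclosed : ∀ w ∈ s, σ₀ w ∈ s := by
    intro w hw
    simp only [hs, Finset.mem_insert, Finset.mem_singleton] at hw ⊢
    rcases hw with rfl | rfl | rfl | rfl
    · tauto
    · tauto
    · rw [h0]; tauto
    · rw [h0]; tauto
  have hmem : ∀ w ∈ s, g w ∈ s ∧ g (g w) = w := by
    intro w hw
    simp only [hs, Finset.mem_insert, Finset.mem_singleton] at hw
    rcases hw with rfl | rfl | rfl | rfl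
    · rw [hgu, hgv]; simp [hs]
    · rw [hgv, hgu]; simp [hs]
    · rw [hgsu, hgsu]; simp [hs]
    · rw [hgsv, hgsv]; simp [hs]
  have hadj : ∀ w ∈ s, g w = w ∨ T.Adj w (g w) := by
    intro w hw
    simp only [hs, Finset.mem_insert, Finset.mem_singleton] at hw
    rcases hw with rfl | rfl | rfl | rfl
    · rw [hgu]; exact Or.inr huv
    · rw [hgv]; exact Or.inr huv.symm
    · rw [hgsu]; exact Or.inl rfl
    · rw [hgsv]; exact Or.inl rfl
  have hinv := patch_invol σ₀ h0 s hclosed g hmem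
  refine ⟨patch_AI σ₀ hAI0 s hclosed g hmem hadj, ?_, ?_⟩
  · rw [patch_fixc σ₀ hnf s g hinv]
    have hfil : s.filter (fun w => g w = w) = {σ₀ u, σ₀ v} := by
      ext w
      simp only [Finset.mem_filter, hs, Finset.mem_insert, Finset.mem_singleton]
      constructor
      · rintro ⟨rfl | rfl | rfl | rfl, h⟩
        · rw [hgu] at h; exact absurd h.symm huv'
        · rw [hgv] at h; exact absurd h huv'
        · tauto
        · tauto
      · rintro (rfl | rfl)
        · exact ⟨by tauto, hgsu⟩
        · exact ⟨by tauto, hgsv⟩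
    rw [hfil, Finset.card_insert_of_notMem (by simpa using hss), Finset.card_singleton]
  · ext w
    simp only [Finset.mem_filter, Finset.mem_univ, true_and, Finset.mem_insert,
      Finset.mem_singleton]
    rw [patchPerm_apply _ _ _ hinv]
    by_cases hw : w ∈ s
    · rw [if_pos hw]
      simp only [hs, Finset.mem_insert, Finset.mem_singleton] at hw
      rcases hw with rfl | rfl | rfl | rfl
      · rw [hgu]; simp [Ne.symm hm, huv'.symm]
      · rw [hgv]
        simp [Ne.symm hsvu, huv']
      · rw [hgsu]
        simp [hsuu, hm]
      · rw [hgsv]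
        simp [hsvv, hsvu]
    · rw [if_neg hw]
      simp only [hs, Finset.mem_insert, Finset.mem_singleton] at hw
      push_neg at hw
      simp [hw.1, hw.2.1]

/-- The extra modification coming from a non-pendant matched edge. -/
lemma star_facts {T : SimpleGraph V} [DecidableRel T.Adj] {σ₀ : Equiv.Perm V}
    (hAI0 : IsAI T σ₀) (hnf : ∀ w, σ₀ w ≠ w) {x y a b : V} (hy : σ₀ x = y)
    (hax : T.Adj x a) (hyb : T.Adj y b) (hay : a ≠ y) (hbx : b ≠ x) (hab : a ≠ b)
    (hsab : σ₀ a ≠ b) (hsba : σ₀ b ≠ a) :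
    ∃ σ, IsAI T σ ∧ fixc σ = 2 ∧
      (univ.filter fun w => σ w ≠ σ₀ w ∧ σ w ≠ w).card = 4 := by
  have h0 := hAI0.1
  have hsy : σ₀ y = x := by rw [← hy, h0]
  have hxy : x ≠ y := by rw [← hy]; exact (hnf x).symm
  have hxa : x ≠ a := hax.ne
  have hyb' : y ≠ b := hyb.ne
  have hsax : σ₀ a ≠ x := by
    intro h
    apply hay
    have := congrArg σ₀ h
    rw [h0, hy] at this
    exact this
  have hsay : σ₀ a ≠ y := by
    intro h
    apply hxa
    have := congrArg σ₀ h
    rw [h0, hsy] at this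
    exact this.symm
  have hsbx : σ₀ b ≠ x := by
    intro h
    apply hyb'
    have := congrArg σ₀ h
    rw [h0, hy] at this
    exact this.symm
  have hsby : σ₀ b ≠ y := by
    intro h
    apply hbx
    have := congrArg σ₀ h
    rw [h0, hsy] at this
    exact this
  have hsasb : σ₀ a ≠ σ₀ b := fun h => hab (σ₀.injective h)
  have hsaa : σ₀ a ≠ a := hnf a
  have hsbb : σ₀ b ≠ b := hnf b
  set s : Finset V := {x, y, a, b, σ₀ a, σ₀ b} with hs
  set g : V → V := flip2 x a y b with hg
  have hgx : g x = a := by simp [hg, flip2]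
  have hga : g a = x := by simp [hg, flip2, hxa.symm]
  have hgy : g y = b := by simp [hg, flip2, hxy.symm, Ne.symm hay]
  have hgb : g b = y := by simp [hg, flip2, hbx, hab.symm, hyb'.symm]
  have hgsa : g (σ₀ a) = σ₀ a := by simp [hg, flip2, hsax, hsay, hnf a, hsab]
  have hgsb : g (σ₀ b) = σ₀ b := by simp [hg, flip2, hsbx, hsby, hsba, hnf b]
  have hclosed : ∀ w ∈ s, σ₀ w ∈ s := by
    intro w hw
    simp only [hs, Finset.mem_insert, Finset.mem_singleton] at hw ⊢
    rcases hw with rfl | rfl | rfl | rfl | rfl | rfl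
    · rw [hy]; tauto
    · rw [hsy]; tauto
    · tauto
    · tauto
    · rw [h0]; tauto
    · rw [h0]; tauto
  have hmem : ∀ w ∈ s, g w ∈ s ∧ g (g w) = w := by
    intro w hw
    simp only [hs, Finset.mem_insert, Finset.mem_singleton] at hw
    rcases hw with rfl | rfl | rfl | rfl | rfl | rfl
    · rw [hgx, hga]; simp [hs]
    · rw [hgy, hgb]; simp [hs]
    · rw [hga, hgx]; simp [hs]
    · rw [hgb, hgy]; simp [hs]
    · rw [hgsa, hgsa]; simp [hs]
    · rw [hgsb, hgsb]; simp [hs]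
  have hadj : ∀ w ∈ s, g w = w ∨ T.Adj w (g w) := by
    intro w hw
    simp only [hs, Finset.mem_insert, Finset.mem_singleton] at hw
    rcases hw with rfl | rfl | rfl | rfl | rfl | rfl
    · rw [hgx]; exact Or.inr hax
    · rw [hgy]; exact Or.inr hyb
    · rw [hga]; exact Or.inr hax.symm
    · rw [hgb]; exact Or.inr hyb.symm
    · rw [hgsa]; exact Or.inl rfl
    · rw [hgsb]; exact Or.inl rfl
  have hinv := patch_invol σ₀ h0 s hclosed g hmem
  refine ⟨patchPerm σ₀ s g, patch_AI σ₀ hAI0 s hclosed g hmem hadj, ?_, ?_⟩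
  · rw [patch_fixc σ₀ hnf s g hinv]
    have hfil : s.filter (fun w => g w = w) = {σ₀ a, σ₀ b} := by
      ext w
      simp only [Finset.mem_filter, hs, Finset.mem_insert, Finset.mem_singleton]
      constructor
      · rintro ⟨rfl | rfl | rfl | rfl | rfl | rfl, h⟩
        · rw [hgx] at h; exact absurd h.symm hxa
        · rw [hgy] at h; exact absurd h.symm hyb'
        · rw [hga] at h; exact absurd h hxa
        · rw [hgb] at h; exact absurd h hyb'
        · tauto
        · tauto
      · rintro (rfl | rfl)
        · exact ⟨by tauto, hgsa⟩
        · exact ⟨by tauto, hgsb⟩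
    rw [hfil, Finset.card_insert_of_notMem (by simpa using hsasb), Finset.card_singleton]
  · have hPset : (univ.filter fun w => patchPerm σ₀ s g w ≠ σ₀ w ∧ patchPerm σ₀ s g w ≠ w)
        = {x, y, a, b} := by
      ext w
      simp only [Finset.mem_filter, Finset.mem_univ, true_and, Finset.mem_insert,
        Finset.mem_singleton]
      rw [patchPerm_apply _ _ _ hinv]
      by_cases hw : w ∈ s
      · rw [if_pos hw]
        simp only [hs, Finset.mem_insert, Finset.mem_singleton] at hw
        rcases hw with rfl | rfl | rfl | rfl | rfl | rfl
        · rw [hgx, hy]; simp [hay, hxa.symm]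
        · rw [hgy, hsy]; simp [hbx, hyb'.symm]
        · rw [hga]
          simp [Ne.symm hsax, hxa]
        · rw [hgb]
          simp [Ne.symm hsby, hyb']
        · rw [hgsa]
          simp [hsax, hsay, hsaa, hsab]
        · rw [hgsb]
          simp [hsbx, hsby, hsba, hsbb]
      · rw [if_neg hw]
        simp only [hs, Finset.mem_insert, Finset.mem_singleton] at hw
        push_neg at hw
        simp [hw.1, hw.2.1, hw.2.2.1, hw.2.2.2.1]
    rw [hPset]
    rw [Finset.card_insert_of_notMem (by simp [hxy, hxa, Ne.symm hbx]),
      Finset.card_insert_of_notMem (by simp [Ne.symm hay, hyb']),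
      Finset.card_insert_of_notMem (by simpa using hab), Finset.card_singleton]

end Pendant2

section Pendant3

variable {V : Type*} [Fintype V] [DecidableEq V]

lemma swap_eq_of_pair_eq {u v p q : V} (huv : u ≠ v)
    (h : ({u, v} : Finset V) = {p, q}) : Equiv.swap u v = Equiv.swap p q := by
  have hu : u = p ∨ u = q := by
    have hm : u ∈ ({u, v} : Finset V) := by simp
    rw [h] at hm
    simpa using hm
  have hv : v = p ∨ v = q := by
    have hm : v ∈ ({u, v} : Finset V) := by simp
    rw [h] at hm
    simpa using hm
  rcases hu with h1 | h1 <;> rcases hv with h2 | h2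
  · exact absurd (h1.trans h2.symm) huv
  · rw [h1, h2]
  · rw [h1, h2, Equiv.swap_comm]
  · exact absurd (h1.trans h2.symm) huv

lemma pendant_of_cnt {T : SimpleGraph V} [DecidableRel T.Adj] (hT : T.IsAcyclic)
    {σ₀ : Equiv.Perm V} (hAI0 : IsAI T σ₀) (hfix0 : fixc σ₀ = 0)
    (huniq : ∀ τ, IsAI T τ → fixc τ = 0 → τ = σ₀)
    (hcnt : cnt T (Fintype.card V - 2) = cnt T 2)
    (hn : 4 ≤ Fintype.card V) :
    ∀ x, T.degree x = 1 ∨ T.degree (σ₀ x) = 1 := by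
  classical
  have h0 := hAI0.1
  have hnf : ∀ w, σ₀ w ≠ w := by
    intro w hw
    have hmem : w ∈ univ.filter (fun u => σ₀ u = u) := by simp [hw]
    rw [fixc, Finset.card_eq_zero] at hfix0
    rw [hfix0] at hmem
    simp at hmem
  have hadj0 : ∀ w, T.Adj w (σ₀ w) := fun w => (hAI0.2 w).resolve_left (hnf w)
  have hsecond : ∀ w, T.degree w ≠ 1 → ∃ z, T.Adj w z ∧ z ≠ σ₀ w := by
    intro w hdeg
    by_contra hcon
    push_neg at hcon
    apply hdeg
    have hnb : T.neighborFinset w = {σ₀ w} := by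
      ext z
      rw [SimpleGraph.mem_neighborFinset, Finset.mem_singleton]
      constructor
      · exact hcon z
      · rintro rfl
        exact hadj0 w
    show (T.neighborFinset w).card = 1
    rw [hnb, Finset.card_singleton]
  intro x
  by_contra hcon
  push_neg at hcon
  obtain ⟨hdx, hdy⟩ := hcon
  obtain ⟨a, hax, hay⟩ := hsecond x hdx
  obtain ⟨b, hby, hbx⟩ := hsecond (σ₀ x) hdy
  rw [h0] at hbx
  by_cases hab : σ₀ a = b
  · have hya : T.Adj (σ₀ x) (σ₀ a) := by rw [hab]; exact hby
    obtain ⟨σ₁, h1, h2, h3⟩ := q_facts hAI0 hnf hax hya hay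
    have heq := huniq σ₁ h1 h2
    rw [heq] at h3
    exact hay h3.symm
  · have hba : σ₀ b ≠ a := by
      intro h
      apply hab
      rw [← h, h0]
    have hab2 : a ≠ b := by
      rintro rfl
      exact no_triangle hT hax hby.symm (hadj0 x)
    obtain ⟨σs, hsAI, hsfix, hsP⟩ := star_facts hAI0 hnf rfl hax hby hay hbx hab2 hab hba
    set F := univ.filter (fun σ : Equiv.Perm V =>
      IsAI T σ ∧ fixc σ = Fintype.card V - 2) with hF
    set A := univ.filter (fun σ : Equiv.Perm V => IsAI T σ ∧ fixc σ = 2) with hA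
    set Jf : Equiv.Perm V → Equiv.Perm V := fun σ =>
      if h : ∃ p : V × V, T.Adj p.1 p.2 ∧ σ = Equiv.swap p.1 p.2 then
        (if σ₀ h.choose.1 = h.choose.2 then patchPerm σ₀ {h.choose.1, h.choose.2} id
         else patchPerm σ₀ {h.choose.1, h.choose.2, σ₀ h.choose.1, σ₀ h.choose.2}
           (fun w => if w = h.choose.1 then h.choose.2 else
             if w = h.choose.2 then h.choose.1 else w))
      else 1 with hJf
    have hdecomp : ∀ σ ∈ F, ∃ p : V × V, T.Adj p.1 p.2 ∧ σ = Equiv.swap p.1 p.2 := by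
      intro σ hσ
      rw [hF] at hσ
      simp only [Finset.mem_filter, Finset.mem_univ, true_and] at hσ
      have hfle : fixc σ ≤ Fintype.card V := by
        rw [fixc, ← Finset.card_univ]
        exact Finset.card_filter_le _ _
      have hmv : (univ.filter fun w => σ w ≠ w).card = 2 := by
        have := fixc_add_moved σ
        omega
      obtain ⟨u, v, hadjuv, hswap⟩ := swap_structure hσ.1 hmv
      exact ⟨(u, v), hadjuv, hswap⟩
    -- description of Jf on F
    have hJfdesc : ∀ σ, ∀ hσ : σ ∈ F,
        ∃ u v, T.Adj u v ∧ σ = Equiv.swap u v ∧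
          Jf σ ∈ A ∧
          ((univ.filter fun w => Jf σ w ≠ σ₀ w ∧ Jf σ w ≠ w) = ∅ ∧
             (univ.filter fun w => Jf σ w ≠ σ₀ w) = {u, v}
           ∨ (univ.filter fun w => Jf σ w ≠ σ₀ w ∧ Jf σ w ≠ w) = {u, v}) := by
      intro σ hσ
      have hex := hdecomp σ hσ
      have hJeq : Jf σ = (if σ₀ hex.choose.1 = hex.choose.2 then
          patchPerm σ₀ {hex.choose.1, hex.choose.2} id
        else patchPerm σ₀ {hex.choose.1, hex.choose.2, σ₀ hex.choose.1, σ₀ hex.choose.2}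
          (fun w => if w = hex.choose.1 then hex.choose.2 else
            if w = hex.choose.2 then hex.choose.1 else w)) := by
        rw [hJf]
        exact dif_pos hex
      obtain ⟨hadjuv, hswap⟩ := hex.choose_spec
      refine ⟨hex.choose.1, hex.choose.2, hadjuv, hswap, ?_, ?_⟩
      · by_cases hm : σ₀ hex.choose.1 = hex.choose.2
        · rw [hJeq, if_pos hm, hA]
          obtain ⟨k1, k2, _, _⟩ := Jmatched_facts hAI0 hnf hadjuv hm
          simp only [Finset.mem_filter, Finset.mem_univ, true_and]
          exact ⟨k1, k2⟩
        · rw [hJeq, if_neg hm, hA]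
          obtain ⟨k1, k2, _⟩ := Jnon_facts hAI0 hnf hadjuv hm
          simp only [Finset.mem_filter, Finset.mem_univ, true_and]
          exact ⟨k1, k2⟩
      · by_cases hm : σ₀ hex.choose.1 = hex.choose.2
        · left
          rw [hJeq, if_pos hm]
          obtain ⟨_, _, k3, k4⟩ := Jmatched_facts hAI0 hnf hadjuv hm
          exact ⟨k3, k4⟩
        · right
          rw [hJeq, if_neg hm]
          obtain ⟨_, _, k3⟩ := Jnon_facts hAI0 hnf hadjuv hm
          exact k3
    have hinj : Set.InjOn Jf F := by
      intro σ hσ τ hτ heq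
      obtain ⟨u, v, huv, hσs, _, hPσ⟩ := hJfdesc σ hσ
      obtain ⟨p, q, hpq, hτs, _, hPτ⟩ := hJfdesc τ hτ
      rw [heq] at hPσ
      rcases hPσ with ⟨hP1, hD1⟩ | hP1 <;> rcases hPτ with ⟨hP2, hD2⟩ | hP2
      · rw [hσs, hτs]
        exact swap_eq_of_pair_eq huv.ne (hD1.symm.trans hD2)
      · exfalso
        have : p ∈ ({p, q} : Finset V) := by simp
        rw [← hP2, hP1] at this
        simp at this
      · exfalso
        have : u ∈ ({u, v} : Finset V) := by simp
        rw [← hP1, hP2] at this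
        simp at this
      · rw [hσs, hτs]
        exact swap_eq_of_pair_eq huv.ne (hP1.symm.trans hP2)
    have hnotimg : σs ∉ F.image Jf := by
      intro hmem
      rw [Finset.mem_image] at hmem
      obtain ⟨σ, hσF, hσeq⟩ := hmem
      obtain ⟨u, v, huv, _, _, hPσ⟩ := hJfdesc σ hσF
      rw [hσeq] at hPσ
      rcases hPσ with ⟨hP1, _⟩ | hP1
      · rw [hP1] at hsP
        simp at hsP
      · rw [hP1] at hsP
        have : ({u, v} : Finset V).card ≤ 2 := by
          apply le_trans (Finset.card_insert_le _ _)
          simp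
        omega
    have hsA : σs ∈ A := by
      rw [hA]
      simp only [Finset.mem_filter, Finset.mem_univ, true_and]
      exact ⟨hsAI, hsfix⟩
    have himg : F.image Jf ⊆ A := by
      intro ρ hρ
      rw [Finset.mem_image] at hρ
      obtain ⟨σ, hσF, hσeq⟩ := hρ
      obtain ⟨_, _, _, _, hmemA, _⟩ := hJfdesc σ hσF
      rw [← hσeq]
      exact hmemA
    have hcard1 : (F.image Jf).card = F.card := Finset.card_image_of_injOn hinj
    have hsub : insert σs (F.image Jf) ⊆ A := by
      rw [Finset.insert_subset_iff]
      exact ⟨hsA, himg⟩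
    have hge : F.card + 1 ≤ A.card := by
      have := Finset.card_le_card hsub
      rw [Finset.card_insert_of_notMem hnotimg, hcard1] at this
      exact this
    have hFc : F.card = cnt T (Fintype.card V - 2) := by rw [hF, cnt]
    have hAc : A.card = cnt T 2 := by rw [hA, cnt]
    omega

end Pendant3

section Build

variable {V : Type*} [Fintype V] [DecidableEq V]

lemma nofix_of_fixc_zero (σ : Equiv.Perm V) (h : fixc σ = 0) : ∀ w, σ w ≠ w := by
  intro w hw
  have hmem : w ∈ univ.filter (fun u => σ u = u) := by simp [hw]
  rw [fixc, Finset.card_eq_zero] at h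
  rw [h] at hmem
  simp at hmem

lemma bot_fin_one_isTree : (⊥ : SimpleGraph (Fin 1)).IsTree := by
  constructor
  · constructor
    intro i j
    rw [Subsingleton.elim i j]
  · intro v c hc
    cases c with
    | nil => exact hc.ne_nil rfl
    | cons h q => exact h

lemma build_iso_two (T : SimpleGraph V) [DecidableRel T.Adj]
    {σ₀ : Equiv.Perm V} (hAI0 : IsAI T σ₀) (hnf : ∀ w, σ₀ w ≠ w)
    (hn : Fintype.card V = 2) :
    ∃ (W : Type) (_ : Finite W) (S : SimpleGraph W),
      S.IsTree ∧ Nat.card W * 2 = Fintype.card V ∧ Nonempty (T ≃g hairing S) := by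
  classical
  have hne : Nonempty V := by
    rw [← Fintype.card_pos_iff]
    omega
  obtain ⟨x⟩ := hne
  have hadj0 : ∀ w, T.Adj w (σ₀ w) := fun w => (hAI0.2 w).resolve_left (hnf w)
  have hadj0' : ∀ w, T.Adj (σ₀ w) w := fun w => (hadj0 w).symm
  have hxs : x ≠ σ₀ x := (hnf x).symm
  have huniv : ({x, σ₀ x} : Finset V) = univ := by
    apply Finset.eq_univ_of_card
    rw [Finset.card_insert_of_notMem (by simpa using hxs), Finset.card_singleton, hn]
  have hall : ∀ v, v = x ∨ v = σ₀ x := by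
    intro v
    have : v ∈ ({x, σ₀ x} : Finset V) := by rw [huniv]; exact Finset.mem_univ v
    simpa using this
  refine ⟨Fin 1, inferInstance, ⊥, bot_fin_one_isTree, by simp [hn], ⟨?_⟩⟩
  refine ⟨⟨fun v => ((0 : Fin 1), if v = x then false else true),
    fun p => if p.2 then σ₀ x else x, ?_, ?_⟩, ?_⟩
  · intro v
    rcases hall v with rfl | rfl
    · simp
    · simp [Ne.symm hxs]
  · rintro ⟨i, b⟩
    cases b
    · simp [Subsingleton.elim (0 : Fin 1) i]
    · simp [Ne.symm hxs, Subsingleton.elim (0 : Fin 1) i]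
  · intro a b
    show (hairing ⊥).Adj _ _ ↔ _
    rcases hall a with rfl | rfl <;> rcases hall b with rfl | rfl
    · simp [hairing_adj]
    · simp only [hairing_adj, Equiv.coe_fn_mk]
      simp [Ne.symm hxs, hadj0]
    · simp only [hairing_adj, Equiv.coe_fn_mk]
      simp [Ne.symm hxs, hadj0']
    · simp [hairing_adj]

end Build

section BuildMain

variable {V : Type*} [Fintype V] [DecidableEq V]

lemma build_iso (T : SimpleGraph V) [DecidableRel T.Adj] (hT : T.IsTree)
    {σ₀ : Equiv.Perm V} (hAI0 : IsAI T σ₀) (hnf : ∀ w, σ₀ w ≠ w)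
    (hpend : ∀ x, T.degree x = 1 ∨ T.degree (σ₀ x) = 1) (hn : 3 ≤ Fintype.card V) :
    ∃ (W : Type) (_ : Finite W) (S : SimpleGraph W),
      S.IsTree ∧ Nat.card W * 2 = Fintype.card V ∧ Nonempty (T ≃g hairing S) := by
  classical
  have h0 := hAI0.1
  have hadj0 : ∀ w, T.Adj w (σ₀ w) := fun w => (hAI0.2 w).resolve_left (hnf w)
  have hadj0' : ∀ w, T.Adj (σ₀ w) w := fun w => (hadj0 w).symm
  have hdegpos : ∀ w, 0 < T.degree w := by
    intro w
    rw [SimpleGraph.degree_pos_iff_exists_adj]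
    exact ⟨σ₀ w, hadj0 w⟩
  have hnbr : ∀ u, ¬ 2 ≤ T.degree u → ∀ z, T.Adj u z → z = σ₀ u := by
    intro u hu z hz
    have hd1 : T.degree u = 1 := by have := hdegpos u; omega
    have h1 : z ∈ T.neighborFinset u := by
      rw [SimpleGraph.mem_neighborFinset]; exact hz
    have h2 : σ₀ u ∈ T.neighborFinset u := by
      rw [SimpleGraph.mem_neighborFinset]; exact hadj0 u
    exact Finset.card_le_one.mp (le_of_eq hd1) _ h1 _ h2
  have hK2 : ∀ w, T.degree w = 1 → T.degree (σ₀ w) = 1 → False := by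
    intro w hw hsw
    have hconf : ∀ (u z' : V) (p : T.Walk u z'), (u = w ∨ u = σ₀ w) →
        (z' = w ∨ z' = σ₀ w) := by
      intro u z' p
      induction p with
      | nil => exact fun h => h
      | cons hadj q ih =>
        intro hu
        apply ih
        rcases hu with h | h
        · right
          subst h
          exact hnbr _ (by omega) _ hadj
        · left
          subst h
          have := hnbr _ (by omega) _ hadj
          rwa [h0] at this
    have hbig : ∃ z, z ≠ w ∧ z ≠ σ₀ w := by
      by_contra hc
      push_neg at hc
      have hsub : (univ : Finset V) ⊆ {w, σ₀ w} := by
        intro z _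
        simp only [Finset.mem_insert, Finset.mem_singleton]
        rcases eq_or_ne z w with h | h
        · exact Or.inl h
        · exact Or.inr (hc z h)
      have hle := Finset.card_le_card hsub
      have h2 : ({w, σ₀ w} : Finset V).card ≤ 2 := by
        apply le_trans (Finset.card_insert_le _ _)
        simp
      rw [Finset.card_univ] at hle
      omega
    obtain ⟨z, hz1, hz2⟩ := hbig
    obtain ⟨p⟩ := hT.isConnected.preconnected w z
    rcases hconf w z p (Or.inl rfl) with h | h
    · exact hz1 h
    · exact hz2 h
  have hxor' : ∀ w, ¬ 2 ≤ T.degree w → 2 ≤ T.degree (σ₀ w) := by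
    intro w hw
    have h1 := hdegpos w
    have h2 := hdegpos (σ₀ w)
    by_contra hc
    exact hK2 w (by omega) (by omega)
  have hxor2 : ∀ w, 2 ≤ T.degree w → ¬ 2 ≤ T.degree (σ₀ w) := by
    intro w hw hsw
    rcases hpend w with h | h <;> omega
  set k := Fintype.card {w : V // 2 ≤ T.degree w} with hk
  set eW : {w : V // 2 ≤ T.degree w} ≃ Fin k := Fintype.equivFin _ with heW
  set S : SimpleGraph (Fin k) :=
    { Adj := fun i j => T.Adj ((eW.symm i) : V) ((eW.symm j) : V)
      symm := ⟨fun i j h => h.symm⟩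
      loopless := ⟨fun i h => T.irrefl h⟩ } with hS
  have hSadj : ∀ i j, S.Adj i j ↔ T.Adj ((eW.symm i) : V) ((eW.symm j) : V) := fun i j => Iff.rfl
  -- the equivalence
  set toF : V → Fin k × Bool := fun w =>
    if h : 2 ≤ T.degree w then (eW ⟨w, h⟩, false) else (eW ⟨σ₀ w, hxor' w h⟩, true) with htoF
  set invF : Fin k × Bool → V := fun p =>
    if p.2 then σ₀ ((eW.symm p.1) : V) else ((eW.symm p.1) : V) with hinvF
  have htoF_s : ∀ w (h : 2 ≤ T.degree w), toF w = (eW ⟨w, h⟩, false) := by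
    intro w h
    rw [htoF]
    exact dif_pos h
  have htoF_l : ∀ w (h : ¬ 2 ≤ T.degree w), toF w = (eW ⟨σ₀ w, hxor' w h⟩, true) := by
    intro w h
    rw [htoF]
    exact dif_neg h
  have hli : Function.LeftInverse invF toF := by
    intro w
    by_cases h : 2 ≤ T.degree w
    · rw [htoF_s w h, hinvF]
      simp
    · rw [htoF_l w h, hinvF]
      simp [h0]
  have hri : Function.RightInverse invF toF := by
    rintro ⟨i, b⟩
    cases b
    · have hsp := (eW.symm i).2
      have hinv0 : invF (i, false) = ((eW.symm i) : V) := by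
        simp [hinvF]
      rw [hinv0, htoF_s _ hsp]
      simp
    · have hsp := (eW.symm i).2
      have hl : ¬ 2 ≤ T.degree (σ₀ ((eW.symm i) : V)) := hxor2 _ hsp
      have hinv1 : invF (i, true) = σ₀ ((eW.symm i) : V) := by
        simp [hinvF]
      rw [hinv1, htoF_l _ hl]
      have hsub : (⟨σ₀ (σ₀ ((eW.symm i) : V)), hxor' _ hl⟩ : {w : V // 2 ≤ T.degree w})
          = eW.symm i := by
        apply Subtype.ext
        simp [h0]
      rw [hsub]
      simp
  set f : V ≃ Fin k × Bool := ⟨toF, invF, hli, hri⟩ with hf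
  have hpair_eq : ∀ (w1 w2 : V) (h1 : 2 ≤ T.degree w1) (h2 : 2 ≤ T.degree w2),
      eW ⟨w1, h1⟩ = eW ⟨w2, h2⟩ ↔ w1 = w2 := by
    intro w1 w2 h1 h2
    constructor
    · intro h
      exact congrArg Subtype.val (eW.injective h)
    · intro h
      apply congrArg eW
      exact Subtype.ext h
  have hadj_iff : ∀ a b, (hairing S).Adj (toF a) (toF b) ↔ T.Adj a b := by
    intro a b
    by_cases ha : 2 ≤ T.degree a <;> by_cases hb : 2 ≤ T.degree b
    · rw [htoF_s a ha, htoF_s b hb, hairing_adj]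
      constructor
      · rintro (⟨_, _, hS1⟩ | ⟨_, hcon⟩)
        · rw [hSadj] at hS1
          simpa using hS1
        · simp at hcon
      · intro hT1
        refine Or.inl ⟨rfl, rfl, ?_⟩
        rw [hSadj]
        simpa using hT1
    · rw [htoF_s a ha, htoF_l b hb, hairing_adj]
      constructor
      · rintro (⟨_, hcon, _⟩ | ⟨heq, _⟩)
        · simp at hcon
        · have h2 : a = σ₀ b := (hpair_eq _ _ _ _).mp heq
          rw [h2]
          exact hadj0' b
      · intro hT1
        refine Or.inr ⟨?_, by simp⟩
        exact (hpair_eq _ _ _ _).mpr (hnbr b hb a hT1.symm)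
    · rw [htoF_l a ha, htoF_s b hb, hairing_adj]
      constructor
      · rintro (⟨hcon, _, _⟩ | ⟨heq, _⟩)
        · simp at hcon
        · have h2 : σ₀ a = b := (hpair_eq _ _ _ _).mp heq
          rw [← h2]
          exact hadj0 a
      · intro hT1
        refine Or.inr ⟨?_, by simp⟩
        exact (hpair_eq _ _ _ _).mpr ((hnbr a ha b hT1).symm)
    · rw [htoF_l a ha, htoF_l b hb, hairing_adj]
      constructor
      · rintro (⟨hcon, _, _⟩ | ⟨_, hcon⟩)
        · simp at hcon
        · simp at hcon
      · intro hT1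
        exfalso
        have hb2 : b = σ₀ a := hnbr a ha b hT1
        rw [hb2] at hb
        exact hb (hxor' a ha)
  -- S is a tree
  have hacyc : S.IsAcyclic := by
    intro i c hc
    let hom : S →g T := ⟨fun j => ((eW.symm j) : V), fun h => h⟩
    have hinj : Function.Injective hom := by
      intro a b h
      apply eW.symm.injective
      apply Subtype.ext
      exact h
    exact hT.IsAcyclic _ (hc.map (f := hom) hinj)
  have hwalk : ∀ (u z : V) (p : T.Walk u z), p.IsPath → ∀ (hu : 2 ≤ T.degree u)
      (hz : 2 ≤ T.degree z), S.Reachable (eW ⟨u, hu⟩) (eW ⟨z, hz⟩) := by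
    intro u z p
    induction p with
    | nil =>
      intro _ hu hz
      exact SimpleGraph.Reachable.refl _
    | @cons u y z hadj q ih =>
      intro hp hu hz
      by_cases hy : 2 ≤ T.degree y
      · have hSa : S.Adj (eW ⟨u, hu⟩) (eW ⟨y, hy⟩) := by
          rw [hSadj]
          simpa using hadj
        exact (hSa.reachable).trans (ih hp.of_cons hy hz)
      · exfalso
        cases q with
        | nil => exact hy hz
        | cons hadj2 q2 =>
          have h1 := hnbr y hy _ hadj2
          have h2 : u = σ₀ y := hnbr y hy u hadj.symm
          have hmem : u ∈ (SimpleGraph.Walk.cons hadj2 q2).support := by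
            rw [SimpleGraph.Walk.support_cons]
            right
            rw [h2, ← h1]
            exact SimpleGraph.Walk.start_mem_support q2
          have := (SimpleGraph.Walk.cons_isPath_iff _ _).mp hp
          exact this.2 hmem
  have hconn : S.Connected := by
    have hne : Nonempty V := by
      rw [← Fintype.card_pos_iff]
      omega
    obtain ⟨w0⟩ := hne
    have hst : Nonempty {w : V // 2 ≤ T.degree w} := by
      by_cases h : 2 ≤ T.degree w0
      · exact ⟨⟨w0, h⟩⟩
      · exact ⟨⟨σ₀ w0, hxor' w0 h⟩⟩
    haveI : Nonempty (Fin k) := ⟨eW hst.some⟩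
    apply SimpleGraph.Connected.mk
    intro i j
    obtain ⟨p, hp, _⟩ := hT.existsUnique_path ((eW.symm i) : V) ((eW.symm j) : V)
    have := hwalk _ _ p hp (eW.symm i).2 (eW.symm j).2
    simpa using this
  have hcount : k * 2 = Fintype.card V := by
    have hks : k = (univ.filter fun w => 2 ≤ T.degree w).card := by
      rw [hk, Fintype.card_subtype]
    have hbij : (univ.filter fun w => 2 ≤ T.degree w).card
        = (univ.filter fun w => ¬ 2 ≤ T.degree w).card := by
      refine Finset.card_bij (fun w _ => σ₀ w) ?_ ?_ ?_
      · intro w hw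
        simp only [Finset.mem_filter, Finset.mem_univ, true_and] at hw ⊢
        exact hxor2 w hw
      · intro a _ b _ h
        exact σ₀.injective h
      · intro y hy
        simp only [Finset.mem_filter, Finset.mem_univ, true_and] at hy
        refine ⟨σ₀ y, ?_, ?_⟩
        · simp only [Finset.mem_filter, Finset.mem_univ, true_and]
          exact hxor' y hy
        · exact h0 y
    have hsum := Finset.card_filter_add_card_filter_not (s := (univ : Finset V))
      (p := fun w => 2 ≤ T.degree w)
    rw [Finset.card_univ] at hsum
    omega
  refine ⟨Fin k, inferInstance, S, ⟨hconn, hacyc⟩, ?_, ⟨⟨f, ?_⟩⟩⟩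
  · rw [Nat.card_eq_fintype_card, Fintype.card_fin]
    exact hcount
  · intro a b
    exact hadj_iff a b

end BuildMain

end APX

/-- A finite tree is antipalindromic iff it is isomorphic to the hairing of some finite
tree with an odd number of vertices. -/
theorem tree_antipalindromic_iff_hairing {V : Type*} [Finite V] (T : SimpleGraph V)
    (hT : T.IsTree) :
    IsAntipalindromic T ↔
      ∃ (W : Type) (_ : Finite W) (S : SimpleGraph W),
        S.IsTree ∧ Odd (Nat.card W) ∧ Nonempty (T ≃g hairing S) := by
  constructor
  · intro hA
    letI : Fintype V := Fintype.ofFinite V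
    letI : DecidableEq V := Classical.decEq V
    letI : DecidableRel T.Adj := Classical.decRel T.Adj
    have hc : charPoly T = (T.adjMatrix ℤ).charpoly := rfl
    have hNat : Nat.card V = Fintype.card V := Nat.card_eq_fintype_card
    have hA' : ∀ i ≤ Fintype.card V, (charPoly T).coeff i
        = -(charPoly T).coeff (Fintype.card V - i) := by
      intro i hi
      have := hA i (by rw [hNat]; exact hi)
      rwa [hNat] at this
    have hn1 : 0 < Fintype.card V := Fintype.card_pos_iff.mpr hT.isConnected.nonempty
    have hcoeff : ∀ j, (charPoly T).coeff j
        = (-1 : ℤ) ^ ((Fintype.card V - j) / 2) * (APX.cnt T j : ℤ) := by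
      intro j
      rw [hc]
      exact APX.coeff_charpoly_AI T hT.IsAcyclic j
    have h00 := hA' 0 (by omega)
    rw [hcoeff 0, hcoeff (Fintype.card V - 0)] at h00
    rw [Nat.sub_zero, Nat.sub_self] at h00
    rw [APX.cnt_card_eq_one T] at h00
    have h00' : (-1 : ℤ) ^ (Fintype.card V / 2) * (APX.cnt T 0 : ℤ) = -1 := by
      simpa using h00
    have hcnt0ne : APX.cnt T 0 ≠ 0 := by
      intro h
      rw [h] at h00'
      simp at h00'
    have heven : Even (Fintype.card V) := by
      have := (APX.cnt_facts T 0 hcnt0ne).2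
      simpa using this
    obtain ⟨m', hm'⟩ := heven
    have hoddm : Odd (Fintype.card V / 2) ∧ APX.cnt T 0 = 1 := by
      rcases Nat.even_or_odd (Fintype.card V / 2) with he | ho
      · exfalso
        rw [Even.neg_one_pow he, one_mul] at h00'
        have hge : (0 : ℤ) ≤ (APX.cnt T 0 : ℤ) := Int.natCast_nonneg _
        omega
      · rw [Odd.neg_one_pow ho] at h00'
        refine ⟨ho, ?_⟩
        have : (APX.cnt T 0 : ℤ) = 1 := by linarith
        exact_mod_cast this
    obtain ⟨hodd, hcnt0⟩ := hoddm
    have hfilt : (Finset.univ.filter (fun σ : Equiv.Perm V =>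
        APX.IsAI T σ ∧ APX.fixc σ = 0)).card = 1 := by
      rw [APX.cnt] at hcnt0
      exact hcnt0
    obtain ⟨σ₀, hσ₀⟩ := Finset.card_eq_one.mp hfilt
    have hmem0 : σ₀ ∈ Finset.univ.filter (fun σ : Equiv.Perm V =>
        APX.IsAI T σ ∧ APX.fixc σ = 0) := by
      rw [hσ₀]
      exact Finset.mem_singleton_self σ₀
    simp only [Finset.mem_filter, Finset.mem_univ, true_and] at hmem0
    have huniq : ∀ τ, APX.IsAI T τ → APX.fixc τ = 0 → τ = σ₀ := by
      intro τ h1 h2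
      have hmem : τ ∈ Finset.univ.filter (fun σ : Equiv.Perm V =>
          APX.IsAI T σ ∧ APX.fixc σ = 0) := by
        simp only [Finset.mem_filter, Finset.mem_univ, true_and]
        exact ⟨h1, h2⟩
      rw [hσ₀] at hmem
      simpa using hmem
    have hnf := APX.nofix_of_fixc_zero σ₀ hmem0.2
    by_cases hn2 : Fintype.card V = 2
    · obtain ⟨W, hWf, S, hS, hcard, hiso⟩ := APX.build_iso_two T hmem0.1 hnf hn2
      refine ⟨W, hWf, S, hS, ?_, hiso⟩
      have h1 : Nat.card W = 1 := by omega
      rw [h1]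
      exact odd_one
    · have hn4 : 4 ≤ Fintype.card V := by omega
      have h22 := hA' 2 (by omega)
      rw [hcoeff 2, hcoeff (Fintype.card V - 2)] at h22
      have hnn2 : Fintype.card V - (Fintype.card V - 2) = 2 := by omega
      rw [hnn2] at h22
      have hev2 : Even ((Fintype.card V - 2) / 2) := by
        obtain ⟨t, ht⟩ := hodd
        exact ⟨t, by omega⟩
      rw [Even.neg_one_pow hev2, one_mul] at h22
      norm_num at h22
      have hcnteq : APX.cnt T (Fintype.card V - 2) = APX.cnt T 2 := by
        exact_mod_cast h22.symm
      have hpend := APX.pendant_of_cnt hT.IsAcyclic hmem0.1 hmem0.2 huniq hcnteq hn4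
      obtain ⟨W, hWf, S, hS, hcard, hiso⟩ := APX.build_iso T hT hmem0.1 hnf hpend (by omega)
      refine ⟨W, hWf, S, hS, ?_, hiso⟩
      have h1 : Nat.card W = Fintype.card V / 2 := by omega
      rw [h1]
      exact hodd
  · rintro ⟨W, hWf, S, hS, hodd, ⟨e⟩⟩
    letI : Fintype V := Fintype.ofFinite V
    letI : DecidableEq V := Classical.decEq V
    letI : DecidableRel T.Adj := Classical.decRel T.Adj
    letI : Fintype W := Fintype.ofFinite W
    letI : DecidableEq W := Classical.decEq W
    letI : DecidableRel S.Adj := Classical.decRel S.Adj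
    intro i hi
    have hc : charPoly T = (T.adjMatrix ℤ).charpoly := rfl
    rw [Nat.card_eq_fintype_card] at hi ⊢
    rw [hc]
    have hodd2 : Odd (Fintype.card W) := by
      rwa [Nat.card_eq_fintype_card] at hodd
    exact APX.forward_coeff T hT.IsAcyclic S hodd2 e i hi
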